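/- arXiv:0706.0876 — 5 statements merged into one kernel-verified Lean document; each statement's English description precedes it below -/
import Mathlib

section
/- Let X be a reflexive Banach space and L an anti-selfdual Lagrangian on X × X*. Then for any (x,p) ∈ X × X*, L(x,p) + ⟨x,p⟩ = 0 if and only if (-p,-x) ∈ ∂L(x,p), where ∂L is the subdifferential of the convex function L on X × X*. -/
open NormedSpace

/-- Legendre transform in both variables. -/
noncomputable def legendre {X : Type*} [NormedAddCommGroup X] [NormedSpace ℝ X]
    (L : X × StrongDual ℝ X → EReal) : StrongDual ℝ X × X → EReal :=
  fun px => ⨆ y : X, ⨆ q : StrongDual ℝ X,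
    (((px.1 y + q px.2 : ℝ) : EReal) - L (y, q))

/-- For an anti-selfdual (convex, lsc) Lagrangian `L` on `X × X*`,
`L(x,p) + ⟨x,p⟩ = 0` iff `(-p,-x) ∈ ∂L(x,p)`, i.e. iff
`L(z,r) ≥ L(x,p) + ⟨z-x, -p⟩ + ⟨r-p, -x⟩` for all `(z,r)`. -/
theorem antiselfdual_eq_zero_iff_subdifferential {X : Type*}
    [NormedAddCommGroup X] [NormedSpace ℝ X]
    (L : X × StrongDual ℝ X → EReal)
    (hbot : ∀ z, L z ≠ ⊥)
    (hconv : ∀ (z w : X × StrongDual ℝ X) (a b : ℝ), 0 ≤ a → 0 ≤ b → a + b = 1 →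
      L (a • z + b • w) ≤ (a : EReal) * L z + (b : EReal) * L w)
    (hlsc : LowerSemicontinuous L)
    (hASD : ∀ (x : X) (p : StrongDual ℝ X), legendre L (p, x) = L (-x, -p)) :
    ∀ (x : X) (p : StrongDual ℝ X),
      L (x, p) + ((p x : ℝ) : EReal) = 0 ↔
      ∀ (z : X) (r : StrongDual ℝ X),
        L (x, p) + (((-(p (z - x)) - (r - p) x : ℝ)) : EReal) ≤ L (z, r) := by
  intro x p
  have hkey : legendre L (-p, -x) = L (x, p) := by
    have := hASD (-x) (-p); simpa using this
  -- Fenchel inequality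
  have fenchel : ∀ (z : X) (r : StrongDual ℝ X),
      (((-(p z) - r x : ℝ)) : EReal) - L (z, r) ≤ L (x, p) := by
    intro z r
    rw [← hkey]
    have h2 := le_iSup (fun q : StrongDual ℝ X =>
      ((((-p) z + q (-x) : ℝ)) : EReal) - L (z, q)) r
    have h3 := le_iSup (fun y : X => ⨆ q : StrongDual ℝ X,
      ((((-p) y + q (-x) : ℝ)) : EReal) - L (y, q)) z
    have h4 : ((((-p) z + r (-x) : ℝ)) : EReal) - L (z, r) ≤ legendre L (-p, -x) :=
      le_trans h2 h3
    have he : ((-p) z + r (-x) : ℝ) = (-(p z) - r x : ℝ) := by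
      simp [sub_eq_add_neg]
    rwa [he] at h4
  constructor
  · intro h z r
    have hntop : L (x, p) ≠ ⊤ := by
      intro htop
      rw [htop, EReal.top_add_coe] at h
      exact absurd h (by simp)
    set a := (L (x, p)).toReal with hadef
    have ha : L (x, p) = (a : EReal) := (EReal.coe_toReal hntop (hbot _)).symm
    rw [ha] at h ⊢
    have hapx : a + p x = 0 := by
      have : ((a + p x : ℝ) : EReal) = ((0 : ℝ) : EReal) := by
        rw [EReal.coe_add]; simpa using h
      exact_mod_cast this
    by_cases hT : L (z, r) = ⊤
    · rw [hT]; exact le_top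
    · set b := (L (z, r)).toReal with hbdef
      have hb : L (z, r) = (b : EReal) := (EReal.coe_toReal hT (hbot _)).symm
      have hf := fenchel z r
      rw [hb, ha, ← EReal.coe_sub] at hf
      have hf' : (-(p z) - r x : ℝ) - b ≤ a := EReal.coe_le_coe_iff.mp hf
      rw [hb, ← EReal.coe_add]
      apply EReal.coe_le_coe_iff.mpr
      have h1 : p (z - x) = p z - p x := map_sub p z x
      have h2 : (r - p) x = r x - p x := by simp
      rw [h1, h2]; linarith
  · intro H
    have hntop : L (x, p) ≠ ⊤ := by
      intro htop
      have hall : ∀ (z : X) (r : StrongDual ℝ X), L (z, r) = ⊤ := by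
        intro z r
        have hH := H z r
        rw [htop, EReal.top_add_coe] at hH
        exact top_le_iff.mp hH
      have hleg : legendre L (-p, -x) = ⊥ := by
        unfold legendre
        simp only [hall, EReal.sub_top]
        simp
      rw [hkey, htop] at hleg
      exact absurd hleg (by simp)
    set a := (L (x, p)).toReal with hadef
    have ha : L (x, p) = (a : EReal) := (EReal.coe_toReal hntop (hbot _)).symm
    -- lower bound: -(p x) ≤ a
    have hge : -(p x) ≤ a := by
      have hf := fenchel x p
      rw [ha, ← EReal.coe_sub] at hf
      have hf' : (-(p x) - p x : ℝ) - a ≤ a := EReal.coe_le_coe_iff.mp hf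
      linarith
    -- upper bound: a ≤ -(p x)
    have hle : a ≤ -(p x) := by
      have hsup : legendre L (-p, -x) ≤ ((-a - 2 * p x : ℝ) : EReal) := by
        apply iSup_le; intro y
        apply iSup_le; intro q
        by_cases hT : L (y, q) = ⊤
        · rw [hT, EReal.sub_top]; exact bot_le
        · set b := (L (y, q)).toReal with hbdef
          have hb : L (y, q) = (b : EReal) := (EReal.coe_toReal hT (hbot _)).symm
          have hH := H y q
          rw [ha, hb, ← EReal.coe_add] at hH
          have hH' : a + (-(p (y - x)) - (q - p) x) ≤ b := EReal.coe_le_coe_iff.mp hH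
          rw [hb, ← EReal.coe_sub]
          apply EReal.coe_le_coe_iff.mpr
          have h1 : p (y - x) = p y - p x := map_sub p y x
          have h2 : (q - p) x = q x - p x := by simp
          have h3 : ((-p, -x) : StrongDual ℝ X × X).1 y = -(p y) := by simp
          have h4 : q (((-p, -x) : StrongDual ℝ X × X).2) = -(q x) := by simp
          rw [h1, h2] at hH'
          rw [h3, h4]
          linarith
      rw [hkey, ha] at hsup
      have : a ≤ -a - 2 * p x := EReal.coe_le_coe_iff.mp hsup
      linarith
    have hax : a = -(p x) := le_antisymm hle hge
    rw [ha, hax, ← EReal.coe_add]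
    norm_num
end

section
/- Let X be a reflexive Banach space, L an anti-selfdual Lagrangian on X × X*, and A : X → X* a bounded skew-adjoint operator (i.e. ⟨Ax,y⟩ = -⟨Ay,x⟩ for all x,y ∈ X). Then the Lagrangian M(u,p) := L(u, Au + p) is also anti-selfdual. -/
open NormedSpace

/-- A Lagrangian is anti-selfdual if `L*(p,x) = L(-x,-p)` for all `(x,p)`. -/
def IsAntiSelfDual {X : Type*} [NormedAddCommGroup X] [NormedSpace ℝ X]
    (L : X × StrongDual ℝ X → EReal) : Prop :=
  ∀ (x : X) (p : StrongDual ℝ X), legendre L (p, x) = L (-x, -p)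

/-- If `L` is anti-selfdual and `A : X → X*` is a bounded skew-adjoint operator
(`⟨Ax, y⟩ = -⟨Ay, x⟩`), then `M(u,p) := L(u, Au + p)` is also anti-selfdual. -/
theorem antiselfdual_skew_shift {X : Type*} [NormedAddCommGroup X] [NormedSpace ℝ X]
    (L : X × StrongDual ℝ X → EReal) (hASD : IsAntiSelfDual L)
    (A : X →L[ℝ] StrongDual ℝ X) (hskew : ∀ x y : X, A x y = -(A y x)) :
    IsAntiSelfDual (fun up => L (up.1, A up.1 + up.2)) := by
  intro x p
  have key : legendre (fun up => L (up.1, A up.1 + up.2)) (p, x)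
      = legendre L (p + A x, x) := by
    unfold legendre
    refine iSup_congr fun y => ?_
    calc (⨆ q : StrongDual ℝ X, (((p y + q x : ℝ) : EReal) - L (y, A y + q)))
        = ⨆ q : StrongDual ℝ X,
            ((fun r : StrongDual ℝ X => ((((p + A x) y + r x : ℝ) : EReal) - L (y, r)))
              ((Equiv.addLeft (A y)) q)) := by
          refine iSup_congr fun q => ?_
          have hx : A x y = -(A y x) := hskew x y
          simp only [Equiv.coe_addLeft, ContinuousLinearMap.add_apply]
          congr 2
          rw [hx]; ring
      _ = ⨆ r : StrongDual ℝ X, ((((p + A x) y + r x : ℝ) : EReal) - L (y, r)) :=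
          (Equiv.addLeft (A y)).iSup_comp
            (g := fun r : StrongDual ℝ X => ((((p + A x) y + r x : ℝ) : EReal) - L (y, r)))
  rw [key, hASD x (p + A x)]
  have : A (-x) + -p = -(p + A x) := by
    rw [map_neg]; abel
  simp only [this]
end

section
/- Let X ⊆ H ⊆ X* be an evolution triple with linear symmetric duality map D, let S̄ be a unitary operator on X* and S = D⁻¹S̄D the induced unitary on X. If L is an anti-selfdual Lagrangian on X × X*, then L_S(u,p) := L(Su, S̄p) is also an anti-selfdual Lagrangian on X × X*. -/
open NormedSpace

/-- With `D : X → X*` a linear symmetric duality map (`‖x‖² = ⟨x,Dx⟩`),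
`S̄` a unitary operator on `X*` (for the inner product `⟨p,q⟩_{X*} = ⟨D⁻¹p,q⟩`)
and `S := D⁻¹ S̄ D` the induced unitary on `X`: if `L` is anti-selfdual on
`X × X*` then so is `L_S(u,p) := L(Su, S̄p)`. -/
theorem antiselfdual_conjugated_unitary {X : Type*}
    [NormedAddCommGroup X] [NormedSpace ℝ X]
    (D : X ≃L[ℝ] StrongDual ℝ X)
    (hsym : ∀ u v : X, D u v = D v u)
    (hnorm : ∀ x : X, ‖x‖ ^ 2 = D x x)
    (Sb : StrongDual ℝ X ≃L[ℝ] StrongDual ℝ X)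
    (hiso : ∀ p q : StrongDual ℝ X, (Sb q) (D.symm (Sb p)) = q (D.symm p))
    (L : X × StrongDual ℝ X → EReal) (hASD : IsAntiSelfDual L) :
    IsAntiSelfDual (fun up => L (D.symm (Sb (D up.1)), Sb up.2)) := by
  intro x p
  set S : X → X := fun y => D.symm (Sb (D y)) with hS
  set Si : X → X := fun y => D.symm (Sb.symm (D y)) with hSi
  have hSiS : ∀ y, S (Si y) = y := by intro y; simp [hS, hSi]
  have hSSi : ∀ y, Si (S y) = y := by intro y; simp [hS, hSi]
  have key : ∀ (u : X) (q : StrongDual ℝ X), (Sb q) (S u) = q u := by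
    intro u q
    simpa [hS] using hiso (D u) q
  have h1 : legendre (fun up => L (D.symm (Sb (D up.1)), Sb up.2)) (p, x)
      = legendre L (Sb p, S x) := by
    unfold legendre
    apply le_antisymm
    · refine iSup_le fun y => iSup_le fun q => ?_
      refine le_iSup_of_le (S y) (le_iSup_of_le (Sb q) (le_of_eq ?_))
      have h2 : p y + q x = (Sb p) (S y) + (Sb q) (S x) := by
        rw [key y p, key x q]
      simp only [← hS, h2]
      rfl
    · refine iSup_le fun y => iSup_le fun q => ?_
      refine le_iSup_of_le (Si y) (le_iSup_of_le (Sb.symm q) (le_of_eq ?_))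
      have h2 : (Sb p) y + q (S x) = p (Si y) + (Sb.symm q) x := by
        have ha : p (Si y) = (Sb p) y := by
          conv_rhs => rw [← hSiS y]
          rw [key (Si y) p]
        have hb : (Sb.symm q) x = q (S x) := by
          conv_rhs => rw [show q = Sb (Sb.symm q) by simp]
          rw [key x (Sb.symm q)]
        rw [ha, hb]
      have h3 : D.symm (Sb (D (Si y))) = y := hSiS y
      simp only [← hS]
      rw [h2, h3, Sb.apply_symm_apply]
  rw [h1, hASD (S x) (Sb p)]
  simp [hS]
end

section
/- Let X be a reflexive Banach space, L an anti-selfdual Lagrangian on X × X*, and suppose there exist C > 0 and r > 1 such that -C ≤ L(x,0) ≤ C(1 + ‖x‖_X^r) for all x ∈ X. Then there exist constants C₁ > 0 and C₂ > 0 such that L(x,q) ≥ C₁‖q‖_{X*}^s - C₂ for every (x,q) ∈ X × X*, where 1/r + 1/s = 1. -/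
open NormedSpace

/-- If `L` is an anti-selfdual Lagrangian on `X × X*` with
`-C ≤ L(x,0) ≤ C(1 + ‖x‖^r)` for some `C > 0`, `r > 1`, then there are `C₁, C₂ > 0`
with `L(x,q) ≥ C₁‖q‖^s - C₂` for all `(x,q)`, where `1/r + 1/s = 1`. -/
theorem antiselfdual_dual_coercive {X : Type*} [NormedAddCommGroup X] [NormedSpace ℝ X]
    (L : X × StrongDual ℝ X → EReal)
    (hASD : ∀ (x : X) (p : StrongDual ℝ X), legendre L (p, x) = L (-x, -p))
    (C r s : ℝ) (hC : 0 < C) (hr : 1 < r) (hrs : 1 / r + 1 / s = 1)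
    (hlow : ∀ x : X, ((-C : ℝ) : EReal) ≤ L (x, 0))
    (hup : ∀ x : X, L (x, 0) ≤ ((C * (1 + ‖x‖ ^ r) : ℝ) : EReal)) :
    ∃ C₁ C₂ : ℝ, 0 < C₁ ∧ 0 < C₂ ∧
      ∀ (x : X) (q : StrongDual ℝ X), ((C₁ * ‖q‖ ^ s - C₂ : ℝ) : EReal) ≤ L (x, q) := by
  have hr0 : (0:ℝ) < r := lt_trans one_pos hr
  have hrne : r ≠ 0 := ne_of_gt hr0
  -- determine s
  have hsne : s ≠ 0 := by
    intro h
    rw [h, div_zero, add_zero, div_eq_one_iff_eq hrne] at hrs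
    exact hr.ne' hrs.symm
  have hs_eq : s = r / (r - 1) := by
    have hr1 : r - 1 ≠ 0 := by intro h; apply (ne_of_gt hr); linarith
    field_simp at hrs ⊢
    nlinarith [hrs]
  have hs1 : 1 < s := by
    rw [hs_eq]
    rw [lt_div_iff₀ (by linarith)]
    linarith
  have hs0 : 0 < s := lt_trans one_pos hs1
  have hkey : r * (s - 1) = s := by
    rw [hs_eq]
    have hr1 : r - 1 ≠ 0 := by intro h; apply (ne_of_gt hr); linarith
    field_simp
    ring
  set b : ℝ := (1 / (4 * C)) ^ (1 / (r - 1)) with hb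
  have hb0 : 0 < b := Real.rpow_pos_of_pos (by positivity) _
  set a : ℝ := min 1 b with ha
  have ha0 : 0 < a := lt_min one_pos hb0
  have ha1 : a ≤ 1 := min_le_left _ _
  have haC : a ≤ b := min_le_right _ _
  refine ⟨a / 4, C, by positivity, hC, fun x q => ?_⟩
  -- find u with ‖u‖ ≤ 1 and ‖q‖ / 2 ≤ (-q) u
  obtain ⟨u, hu1, hu2⟩ : ∃ u : X, ‖u‖ ≤ 1 ∧ ‖q‖ / 2 ≤ (-q) u := by
    by_cases hq : q = 0
    · exact ⟨0, by simp, by simp [hq]⟩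
    · have hqn : 0 < ‖q‖ := norm_pos_iff.mpr hq
      have h2 : ‖q‖ / 2 < ‖-q‖ := by rw [norm_neg]; linarith
      obtain ⟨u, hu1, hu2⟩ := (-q).exists_lt_apply_of_lt_opNorm h2
      rcases le_or_gt 0 ((-q) u) with h | h
      · exact ⟨u, hu1.le, by rw [Real.norm_eq_abs, abs_of_nonneg h] at hu2; linarith⟩
      · refine ⟨-u, by simpa using hu1.le, ?_⟩
        rw [Real.norm_eq_abs, abs_of_neg h] at hu2
        simp only [map_neg]
        linarith
  -- set t
  set t : ℝ := a * ‖q‖ ^ (s - 1) with ht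
  have hqn : (0:ℝ) ≤ ‖q‖ := norm_nonneg q
  have ht0 : 0 ≤ t := by positivity
  set y : X := t • u with hy
  -- L (x, q) = legendre L (-q, -x)
  have hL : legendre L (-q, -x) = L (x, q) := by
    have := hASD (-x) (-q)
    simpa using this
  have hstep : (((-q) y + (0 : StrongDual ℝ X) (-x) : ℝ) : EReal) - L (y, 0) ≤ L (x, q) := by
    rw [← hL, legendre]
    have h1 : (((-q) y + (0 : StrongDual ℝ X) (-x) : ℝ) : EReal) - L (y, 0) ≤
        ⨆ p : StrongDual ℝ X, (((-q) y + p (-x) : ℝ) : EReal) - L (y, p) :=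
      le_iSup (fun p : StrongDual ℝ X => (((-q) y + p (-x) : ℝ) : EReal) - L (y, p)) 0
    refine le_trans h1 ?_
    exact le_iSup (fun y' : X =>
      ⨆ p : StrongDual ℝ X, (((-q) y' + p (-x) : ℝ) : EReal) - L (y', p)) y
  have hstep2 : (((-q) y - C * (1 + ‖y‖ ^ r) : ℝ) : EReal) ≤ L (x, q) := by
    refine le_trans ?_ hstep
    rw [EReal.coe_sub]
    have : ((((-q) y + (0 : StrongDual ℝ X) (-x) : ℝ)) : EReal) = (((-q) y : ℝ) : EReal) := by
      norm_num
    rw [this]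
    exact EReal.sub_le_sub le_rfl (hup y)
  refine le_trans ?_ hstep2
  rw [EReal.coe_le_coe_iff]
  -- real inequality
  have hyn : ‖y‖ ≤ t := by
    rw [hy, norm_smul, Real.norm_eq_abs, abs_of_nonneg ht0]
    calc t * ‖u‖ ≤ t * 1 := by exact mul_le_mul_of_nonneg_left hu1 ht0
    _ = t := mul_one t
  have hyr : ‖y‖ ^ r ≤ t ^ r := Real.rpow_le_rpow (norm_nonneg y) hyn hr0.le
  have hqy : t * (‖q‖ / 2) ≤ (-q) y := by
    rw [hy, map_smul]
    simp only [smul_eq_mul]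
    exact mul_le_mul_of_nonneg_left hu2 ht0
  have htr : t ^ r = a ^ r * ‖q‖ ^ s := by
    rw [ht, Real.mul_rpow ha0.le (Real.rpow_nonneg hqn _),
      ← Real.rpow_mul hqn, mul_comm (s - 1) r, hkey]
  have hpow : ‖q‖ ^ (s - 1) * ‖q‖ = ‖q‖ ^ s := by
    nth_rewrite 2 [← Real.rpow_one ‖q‖]
    rw [← Real.rpow_add' hqn (by rw [sub_add_cancel]; exact hsne), sub_add_cancel]
  have htq : t * ‖q‖ = a * ‖q‖ ^ s := by
    rw [ht, mul_assoc, hpow]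
  have har : C * a ^ r ≤ a / 4 := by
    have hr1 : (0:ℝ) < r - 1 := by linarith
    have hbe : b ^ (r - 1) = 1 / (4 * C) := by
      rw [hb, ← Real.rpow_mul (by positivity), one_div_mul_cancel (ne_of_gt hr1),
        Real.rpow_one]
    have h1 : a ^ (r - 1) ≤ 1 / (4 * C) := by
      rw [← hbe]; exact Real.rpow_le_rpow ha0.le haC hr1.le
    have h2 : a ^ r = a ^ (r - 1) * a := by
      rw [← Real.rpow_add_one (ne_of_gt ha0)]
      ring_nf
    rw [h2]
    have : C * (a ^ (r - 1) * a) ≤ C * ((1 / (4 * C)) * a) := by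
      apply mul_le_mul_of_nonneg_left _ hC.le
      exact mul_le_mul_of_nonneg_right h1 ha0.le
    calc C * (a ^ (r - 1) * a) ≤ C * ((1 / (4 * C)) * a) := this
    _ = a / 4 := by field_simp
  have hqs : (0:ℝ) ≤ ‖q‖ ^ s := Real.rpow_nonneg hqn _
  have h1 : C * ‖y‖ ^ r ≤ C * a ^ r * ‖q‖ ^ s := by
    rw [mul_assoc, ← htr]
    exact mul_le_mul_of_nonneg_left hyr hC.le
  have h2 : a / 2 * ‖q‖ ^ s ≤ (-q) y := by
    have : t * (‖q‖ / 2) = a / 2 * ‖q‖ ^ s := by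
      rw [show t * (‖q‖ / 2) = t * ‖q‖ / 2 by ring, htq]; ring
    linarith [hqy, this ▸ hqy]
  have h3 : C * a ^ r * ‖q‖ ^ s ≤ a / 4 * ‖q‖ ^ s := mul_le_mul_of_nonneg_right har hqs
  nlinarith [h1, h2, h3]
end

section
/- With the notation above, assume the boundary Lagrangian ℓ : X × X → ℝ ∪ {+∞} satisfies ℓ(x,p) ≥ -⟨x, Ãp⟩ for all x ∈ X and p ∈ Y (Y the completion of D(Ã) under ⟨u, Ãu⟩). Then for every u ∈ W, ℓ(u(T) - u(0), R(u(T)+u(0))/2) + ∫₀ᵀ ⟨Ju̇(t), J𝒜u(t)⟩ dt ≥ 0. -/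
open MeasureTheory
open scoped RealInnerProductSpace

variable {H : Type*} [NormedAddCommGroup H] [InnerProductSpace ℝ H]

/-- The Hilbertian inner product of `X = H × H`. -/
noncomputable def innerX (a b : H × H) : ℝ := ⟪a.1, b.1⟫ + ⟪a.2, b.2⟫

/-- The symplectic operator `J(p,q) = (-q,p)`. -/
def Jmap (z : H × H) : H × H := (-z.2, z.1)

/-- The operator `𝒜(p,q) = (Ap, -Aq)`. -/
def Amap (A : H →ₗ[ℝ] H) (z : H × H) : H × H := (A z.1, -A z.2)

/-- The operator `Ã(p,q) = (Ap, Aq)`. -/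
def Atil (A : H →ₗ[ℝ] H) (z : H × H) : H × H := (A z.1, A z.2)

/-- The automorphism `R(p,q) = (p,-q)`. -/
def Rmap (z : H × H) : H × H := (z.1, -z.2)

/-- If the boundary Lagrangian `ℓ` satisfies `ℓ(x,p) ≥ -⟨x, Ãp⟩`, then for every
path `u ∈ W`, `ℓ(u(T)-u(0), R(u(T)+u(0))/2) + ∫₀ᵀ ⟨Ju̇, J𝒜u⟩ dt ≥ 0`. -/
theorem boundary_lagrangian_nonneg [CompleteSpace H]
    (A : H →ₗ[ℝ] H)
    (hsym : ∀ x y : H, ⟪A x, y⟫ = ⟪x, A y⟫)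
    (c₀ : ℝ) (hc₀ : 0 < c₀) (hcoer : ∀ x : H, c₀ * ‖x‖ ^ 2 ≤ ⟪A x, x⟫)
    (ℓ : (H × H) × (H × H) → EReal)
    (hℓ : ∀ x p : H × H, ((-innerX x (Atil A p) : ℝ) : EReal) ≤ ℓ (x, p))
    (T : ℝ) (hT : 0 ≤ T) (u u' : ℝ → H × H)
    (hder : ∀ t ∈ Set.uIcc (0 : ℝ) T, HasDerivAt u (u' t) t)
    (hAder : ∀ t ∈ Set.uIcc (0 : ℝ) T,
      HasDerivAt (fun s => Atil A (u s)) (Atil A (u' t)) t)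
    (hint : IntervalIntegrable
      (fun t => innerX (Jmap (u' t)) (Jmap (Amap A (u t)))) volume 0 T) :
    0 ≤ ℓ (u T - u 0, Rmap ((2⁻¹ : ℝ) • (u T + u 0)))
        + (((∫ t in (0 : ℝ)..T, innerX (Jmap (u' t)) (Jmap (Amap A (u t)))) : ℝ) : EReal) := by
  set F : ℝ → ℝ := fun s =>
    (2⁻¹ : ℝ) * (⟪(u s).1, A ((u s).1)⟫ - ⟪(u s).2, A ((u s).2)⟫) with hF
  have key : ∀ t ∈ Set.uIcc (0 : ℝ) T,
      HasDerivAt F (innerX (Jmap (u' t)) (Jmap (Amap A (u t)))) t := by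
    intro t ht
    have h1 : HasDerivAt (fun s => (u s).1) ((u' t).1) t := (hder t ht).fst
    have h2 : HasDerivAt (fun s => (u s).2) ((u' t).2) t := (hder t ht).snd
    have hA1 : HasDerivAt (fun s => A ((u s).1)) (A ((u' t).1)) t := (hAder t ht).fst
    have hA2 : HasDerivAt (fun s => A ((u s).2)) (A ((u' t).2)) t := (hAder t ht).snd
    have hi1 := h1.inner ℝ hA1
    have hi2 := h2.inner ℝ hA2
    have := ((hi1.sub hi2).const_mul (2⁻¹ : ℝ))
    convert this using 1
    all_goals try rfl
    have e1 : ⟪(u t).1, A ((u' t).1)⟫ = ⟪(u' t).1, A ((u t).1)⟫ := by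
      rw [← hsym, real_inner_comm]
    have e2 : ⟪(u t).2, A ((u' t).2)⟫ = ⟪(u' t).2, A ((u t).2)⟫ := by
      rw [← hsym, real_inner_comm]
    simp only [innerX, Jmap, Amap, inner_neg_left, neg_neg, e1, e2]
    ring
  have hintval : (∫ t in (0 : ℝ)..T, innerX (Jmap (u' t)) (Jmap (Amap A (u t))))
      = F T - F 0 :=
    intervalIntegral.integral_eq_sub_of_hasDerivAt key hint
  have halg : F T - F 0
      = innerX (u T - u 0) (Atil A (Rmap ((2⁻¹ : ℝ) • (u T + u 0)))) := by
    have c1 : ⟪(u 0).1, A ((u T).1)⟫ = ⟪(u T).1, A ((u 0).1)⟫ := by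
      rw [← hsym, real_inner_comm]
    have c2 : ⟪(u 0).2, A ((u T).2)⟫ = ⟪(u T).2, A ((u 0).2)⟫ := by
      rw [← hsym, real_inner_comm]
    simp only [hF, innerX, Atil, Rmap, Prod.smul_fst, Prod.smul_snd, Prod.fst_add,
      Prod.snd_add, Prod.fst_sub, Prod.snd_sub, LinearMap.map_smul, map_add, map_neg,
      inner_sub_left, inner_add_right, inner_smul_right, inner_neg_right, inner_neg_left,
      smul_eq_mul, c1, c2]
    ring
  have hE := hℓ (u T - u 0) (Rmap ((2⁻¹ : ℝ) • (u T + u 0)))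
  have hIval : (∫ t in (0 : ℝ)..T, innerX (Jmap (u' t)) (Jmap (Amap A (u t))))
      = innerX (u T - u 0) (Atil A (Rmap ((2⁻¹ : ℝ) • (u T + u 0)))) :=
    hintval.trans halg
  rw [hIval]
  set J : ℝ := innerX (u T - u 0) (Atil A (Rmap ((2⁻¹ : ℝ) • (u T + u 0))))
  calc (0 : EReal) = ((-J : ℝ) : EReal) + (J : ℝ) := by
        norm_cast; ring
    _ ≤ _ := add_le_add_left hE _
end
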